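/- Let μ₂ < 0 and α ∈ (0,π), and define S(a+ib) implicitly by Re S(a+ib) = a cos α − μ₂ sin α + sin α · Re √(μ₁²+μ₂² − (a+ib+μ₁)²) for a ∈ [θ₁⁻, θ₁⁺], b ∈ ℝ (principal branch of square root). Then for each fixed a ∈ [θ₁⁻, θ₁⁺], the function b ↦ Re S(a+ib) is nondecreasing on [0,∞) and nonincreasing on (−∞,0], and there exist constants c₁ > 0, c₂ > 0, B > 0 such that inf_{a ∈ [θ₁⁻,θ₁⁺]} Re S(a+ib) ≥ −c₁ + c₂ sin α · |b| for all |b| ≥ B. -/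

import Mathlib

open Complex

private lemma re_formula (R w b : ℝ) :
    ((((R : ℝ) : ℂ) - ((w : ℂ) + (b : ℂ) * Complex.I) ^ 2) ^ ((1 : ℂ) / 2)).re
      = Real.sqrt ((Real.sqrt ((R - w ^ 2 + b ^ 2) ^ 2 + (2 * w * b) ^ 2)
          + (R - w ^ 2 + b ^ 2)) / 2) := by
  have h2 : (1 : ℂ) / 2 = (2⁻¹ : ℂ) := by norm_num
  rw [h2, Complex.cpow_inv_two_re]
  set z : ℂ := ((R : ℝ) : ℂ) - ((w : ℂ) + (b : ℂ) * Complex.I) ^ 2 with hz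
  have hz2 : z = ((R - w ^ 2 + b ^ 2 : ℝ) : ℂ) + ((-(2 * w * b) : ℝ) : ℂ) * Complex.I := by
    rw [hz]
    have hI : Complex.I ^ 2 = -1 := Complex.I_sq
    push_cast
    ring_nf
    rw [hI]
    ring
  have hre : z.re = R - w ^ 2 + b ^ 2 := by simp [hz2, ← Complex.ofReal_pow]
  have him : z.im = -(2 * w * b) := by simp [hz2, ← Complex.ofReal_pow]
  have habs : ‖z‖ = Real.sqrt ((R - w ^ 2 + b ^ 2) ^ 2 + (2 * w * b) ^ 2) := by
    rw [Complex.norm_def, Complex.normSq_apply, hre, him]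
    ring_nf
  rw [habs, hre]

private lemma g_mono (C w b₁ b₂ : ℝ) (hC : 0 ≤ C) (h : b₁ ^ 2 ≤ b₂ ^ 2) :
    Real.sqrt ((Real.sqrt ((C + b₁ ^ 2) ^ 2 + (2 * w * b₁) ^ 2) + (C + b₁ ^ 2)) / 2)
      ≤ Real.sqrt ((Real.sqrt ((C + b₂ ^ 2) ^ 2 + (2 * w * b₂) ^ 2) + (C + b₂ ^ 2)) / 2) := by
  apply Real.sqrt_le_sqrt
  have h1 : (C + b₁ ^ 2) ^ 2 ≤ (C + b₂ ^ 2) ^ 2 := by nlinarith [sq_nonneg b₁, sq_nonneg b₂]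
  have h2 : (2 * w * b₁) ^ 2 ≤ (2 * w * b₂) ^ 2 := by nlinarith [sq_nonneg w]
  have h3 := Real.sqrt_le_sqrt (by linarith :
    (C + b₁ ^ 2) ^ 2 + (2 * w * b₁) ^ 2 ≤ (C + b₂ ^ 2) ^ 2 + (2 * w * b₂) ^ 2)
  linarith

private lemma g_lb (C w b : ℝ) (hC : 0 ≤ C) :
    |b| ≤ Real.sqrt ((Real.sqrt ((C + b ^ 2) ^ 2 + (2 * w * b) ^ 2) + (C + b ^ 2)) / 2) := by
  have hu : 0 ≤ C + b ^ 2 := by positivity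
  have h1 : C + b ^ 2 ≤ Real.sqrt ((C + b ^ 2) ^ 2 + (2 * w * b) ^ 2) := by
    have := Real.sqrt_le_sqrt (show (C + b ^ 2) ^ 2 ≤ (C + b ^ 2) ^ 2 + (2 * w * b) ^ 2 by
      nlinarith [sq_nonneg (2 * w * b)])
    rwa [Real.sqrt_sq hu] at this
  calc |b| = Real.sqrt (b ^ 2) := (Real.sqrt_sq_eq_abs b).symm
    _ ≤ _ := Real.sqrt_le_sqrt (by nlinarith)

theorem stmt_15 (μ₁ μ₂ : ℝ) (hμ₂ : μ₂ < 0) (α : ℝ) (hα : α ∈ Set.Ioo 0 Real.pi) :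
    (∀ a ∈ Set.Icc (-μ₁ - Real.sqrt (μ₁ ^ 2 + μ₂ ^ 2)) (-μ₁ + Real.sqrt (μ₁ ^ 2 + μ₂ ^ 2)),
      MonotoneOn (fun b : ℝ =>
          a * Real.cos α - μ₂ * Real.sin α + Real.sin α *
            ((((μ₁ ^ 2 + μ₂ ^ 2 : ℝ) : ℂ)
              - ((a : ℂ) + (b : ℂ) * Complex.I + (μ₁ : ℂ)) ^ 2) ^ ((1 : ℂ) / 2)).re)
        (Set.Ici 0) ∧
      AntitoneOn (fun b : ℝ =>
          a * Real.cos α - μ₂ * Real.sin α + Real.sin α *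
            ((((μ₁ ^ 2 + μ₂ ^ 2 : ℝ) : ℂ)
              - ((a : ℂ) + (b : ℂ) * Complex.I + (μ₁ : ℂ)) ^ 2) ^ ((1 : ℂ) / 2)).re)
        (Set.Iic 0)) ∧
    (∃ c₁ > (0 : ℝ), ∃ c₂ > (0 : ℝ), ∃ B > (0 : ℝ), ∀ b : ℝ, B ≤ |b| →
      ∀ a ∈ Set.Icc (-μ₁ - Real.sqrt (μ₁ ^ 2 + μ₂ ^ 2)) (-μ₁ + Real.sqrt (μ₁ ^ 2 + μ₂ ^ 2)),
        -c₁ + c₂ * Real.sin α * |b|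
          ≤ a * Real.cos α - μ₂ * Real.sin α + Real.sin α *
              ((((μ₁ ^ 2 + μ₂ ^ 2 : ℝ) : ℂ)
                - ((a : ℂ) + (b : ℂ) * Complex.I + (μ₁ : ℂ)) ^ 2) ^ ((1 : ℂ) / 2)).re) := by
  set R : ℝ := μ₁ ^ 2 + μ₂ ^ 2 with hR
  have hRnn : 0 ≤ R := by positivity
  have hsin : 0 < Real.sin α := Real.sin_pos_of_pos_of_lt_pi hα.1 hα.2
  -- rewrite the inner complex number
  have hrw : ∀ a b : ℝ,
      (((R : ℝ) : ℂ) - ((a : ℂ) + (b : ℂ) * Complex.I + (μ₁ : ℂ)) ^ 2) ^ ((1 : ℂ) / 2)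
        = (((R : ℝ) : ℂ) - (((a + μ₁ : ℝ) : ℂ) + (b : ℂ) * Complex.I) ^ 2) ^ ((1 : ℂ) / 2) := by
    intro a b; congr 1; push_cast; ring
  have hre : ∀ a b : ℝ,
      ((((R : ℝ) : ℂ) - ((a : ℂ) + (b : ℂ) * Complex.I + (μ₁ : ℂ)) ^ 2) ^ ((1 : ℂ) / 2)).re
        = Real.sqrt ((Real.sqrt (((R - (a + μ₁) ^ 2) + b ^ 2) ^ 2 + (2 * (a + μ₁) * b) ^ 2)
            + ((R - (a + μ₁) ^ 2) + b ^ 2)) / 2) := by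
    intro a b
    rw [hrw a b, re_formula R (a + μ₁) b]
  -- C ≥ 0 for a in the interval
  have hCnn : ∀ a ∈ Set.Icc (-μ₁ - Real.sqrt R) (-μ₁ + Real.sqrt R),
      0 ≤ R - (a + μ₁) ^ 2 := by
    intro a ha
    have h1 : -(Real.sqrt R) ≤ a + μ₁ := by linarith [ha.1]
    have h2 : a + μ₁ ≤ Real.sqrt R := by linarith [ha.2]
    have := Real.sq_sqrt hRnn
    nlinarith [abs_le_of_sq_le_sq' (by nlinarith : (a + μ₁) ^ 2 ≤ Real.sqrt R ^ 2)]
  constructor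
  · intro a ha
    set C : ℝ := R - (a + μ₁) ^ 2 with hC
    have hC0 : 0 ≤ C := hCnn a ha
    constructor
    · intro b₁ hb₁ b₂ hb₂ hle
      simp only [hre a]
      have : b₁ ^ 2 ≤ b₂ ^ 2 := by nlinarith [Set.mem_Ici.mp hb₁]
      have := g_mono C (a + μ₁) b₁ b₂ hC0 this
      nlinarith [hsin.le]
    · intro b₁ hb₁ b₂ hb₂ hle
      simp only [hre a]
      have : b₂ ^ 2 ≤ b₁ ^ 2 := by nlinarith [Set.mem_Iic.mp hb₂]
      have := g_mono C (a + μ₁) b₂ b₁ hC0 this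
      nlinarith [hsin.le]
  · refine ⟨|μ₁| + Real.sqrt R + 1, by positivity, 1, one_pos, 1, one_pos, ?_⟩
    intro b hb a ha
    rw [hre a b]
    set C : ℝ := R - (a + μ₁) ^ 2 with hC
    have hC0 : 0 ≤ C := hCnn a ha
    have hlb := g_lb C (a + μ₁) b hC0
    have haabs : |a| ≤ |μ₁| + Real.sqrt R := by
      rw [abs_le]
      constructor
      · have := ha.1; have := le_abs_self μ₁; linarith
      · have := ha.2; have := le_abs_self (-μ₁); simp at this; linarith
    have hcos : a * Real.cos α ≥ -(|μ₁| + Real.sqrt R) := by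
      have h1 : |a * Real.cos α| ≤ |μ₁| + Real.sqrt R := by
        rw [abs_mul]
        calc |a| * |Real.cos α| ≤ |a| * 1 :=
              mul_le_mul_of_nonneg_left (Real.abs_cos_le_one α) (abs_nonneg a)
          _ ≤ |μ₁| + Real.sqrt R := by rwa [mul_one]
      linarith [neg_abs_le (a * Real.cos α)]
    have hμ : 0 ≤ -μ₂ * Real.sin α := by nlinarith
    nlinarith [hsin.le, mul_le_mul_of_nonneg_left hlb hsin.le]
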